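/- Let L/K be a totally ramified Galois extension of degree p of complete discrete valued fields of characteristic p, with ramification break s, and let σ be a generator of Gal(L/K). If x ∈ O_L satisfies tr(x) = 0 and v_L(x) ≥ s, then x ∈ (σ−1)O_L, i.e., x = σ(y) − y for some y ∈ O_L. Equivalently, any trace-zero element x ∈ O_L representing a nonzero class in H^1(Gal(L/K), O_L) satisfies v_L(x) ≤ s − 1. -/

import Mathlib

/-!
Common background: complete discretely valued fields, their valuation rings,
residue fields, Galois action on the valuation ring, truncated Witt vector
functoriality, and ramification breaks.
-/

noncomputable section

open scoped Classical

/-- A field equipped with a normalized (i.e. surjective onto `ℤ`) discrete additive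
valuation `v : K → WithTop ℤ` with respect to which it is complete. -/
structure CompleteDiscreteValuation (K : Type*) [Field K] where
  v : K → WithTop ℤ
  eq_top_iff : ∀ x : K, v x = ⊤ ↔ x = 0
  map_one : v 1 = 0
  map_mul : ∀ x y : K, v (x * y) = v x + v y
  min_le_add : ∀ x y : K, min (v x) (v y) ≤ v (x + y)
  surjective : ∀ n : ℤ, ∃ x : K, v x = (n : WithTop ℤ)
  complete : ∀ x : ℕ → K,
      (∀ n : ℕ, ((n : ℤ) : WithTop ℤ) ≤ v (x (n + 1) - x n)) →
      ∃ y : K, ∀ n : ℕ, ((n : ℤ) : WithTop ℤ) ≤ v (y - x n)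

namespace TruncatedWittVector

variable {p n : ℕ} [hp : Fact p.Prime] {R S : Type*} [CommRing R] [CommRing S]

lemma truncateFun_congr_map (f : R →+* S) (a b : WittVector p R)
    (h : WittVector.truncateFun n a = WittVector.truncateFun n b) :
    WittVector.truncateFun n (WittVector.map f a) =
      WittVector.truncateFun n (WittVector.map f b) := by
  ext i
  have hc := congrArg (fun z => TruncatedWittVector.coeff i z) h
  simp only [WittVector.coeff_truncateFun] at hc ⊢
  rw [WittVector.map_coeff, WittVector.map_coeff, hc]

/-- Functoriality of truncated Witt vectors: the ring homomorphism
`W_n(R) → W_n(S)` induced by `f : R → S`, acting componentwise. -/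
def map (f : R →+* S) : TruncatedWittVector p n R →+* TruncatedWittVector p n S where
  toFun x := WittVector.truncateFun n (WittVector.map f x.out)
  map_one' := by
    show WittVector.truncateFun n (WittVector.map f (1 : TruncatedWittVector p n R).out) = 1
    have h : WittVector.truncateFun n ((1 : TruncatedWittVector p n R)).out =
        WittVector.truncateFun n (1 : WittVector p R) := by
      rw [truncateFun_out, WittVector.truncateFun_one]
    have := truncateFun_congr_map f _ _ h
    rw [this, map_one, WittVector.truncateFun_one]
  map_mul' x y := by
    show WittVector.truncateFun n (WittVector.map f (x * y).out) =
      WittVector.truncateFun n (WittVector.map f x.out) *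
        WittVector.truncateFun n (WittVector.map f y.out)
    have h : WittVector.truncateFun n (x * y).out =
        WittVector.truncateFun n (x.out * y.out) := by
      rw [truncateFun_out, WittVector.truncateFun_mul, truncateFun_out, truncateFun_out]
    have := truncateFun_congr_map f _ _ h
    rw [this, map_mul, WittVector.truncateFun_mul]
  map_zero' := by
    show WittVector.truncateFun n (WittVector.map f (0 : TruncatedWittVector p n R).out) = 0
    have h : WittVector.truncateFun n ((0 : TruncatedWittVector p n R)).out =
        WittVector.truncateFun n (0 : WittVector p R) := by
      rw [truncateFun_out, WittVector.truncateFun_zero]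
    have := truncateFun_congr_map f _ _ h
    rw [this, map_zero, WittVector.truncateFun_zero]
  map_add' x y := by
    show WittVector.truncateFun n (WittVector.map f (x + y).out) =
      WittVector.truncateFun n (WittVector.map f x.out) +
        WittVector.truncateFun n (WittVector.map f y.out)
    have h : WittVector.truncateFun n (x + y).out =
        WittVector.truncateFun n (x.out + y.out) := by
      rw [truncateFun_out, WittVector.truncateFun_add, truncateFun_out, truncateFun_out]
    have := truncateFun_congr_map f _ _ h
    rw [this, map_add, WittVector.truncateFun_add]

@[simp]
lemma map_coeff (f : R →+* S) (x : TruncatedWittVector p n R) (i : Fin n) :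
    (map f x).coeff i = f (x.coeff i) := by
  show (WittVector.truncateFun n (WittVector.map f x.out)).coeff i = f (x.coeff i)
  rw [WittVector.coeff_truncateFun, WittVector.map_coeff, coeff_out]

end TruncatedWittVector

namespace CompleteDiscreteValuation

variable {K : Type*} [Field K]

lemma v_zero (w : CompleteDiscreteValuation K) : w.v 0 = ⊤ := (w.eq_top_iff 0).2 rfl

lemma v_neg_one (w : CompleteDiscreteValuation K) : w.v (-1) = 0 := by
  have h := w.map_mul (-1) (-1)
  rw [neg_mul_neg, one_mul, w.map_one] at h
  cases h' : w.v (-1) with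
  | top =>
      exact absurd ((w.eq_top_iff (-1)).1 h') (by norm_num)
  | coe a =>
      rw [h'] at h
      have ha : a + a = 0 := by exact_mod_cast h.symm
      have : a = 0 := by omega
      rw [this]
      rfl

lemma v_neg (w : CompleteDiscreteValuation K) (x : K) : w.v (-x) = w.v x := by
  rw [show -x = -1 * x by ring, w.map_mul, w.v_neg_one, zero_add]

/-- The valuation ring (ring of integers) of a complete discretely valued field. -/
def integers (w : CompleteDiscreteValuation K) : Subring K where
  carrier := {x : K | 0 ≤ w.v x}
  zero_mem' := by simp [Set.mem_setOf_eq, v_zero]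
  one_mem' := by simp [Set.mem_setOf_eq, w.map_one]
  add_mem' {a b} ha hb := le_trans (le_min ha hb) (w.min_le_add a b)
  mul_mem' {a b} ha hb := by
    simp only [Set.mem_setOf_eq] at *
    rw [w.map_mul]
    exact add_nonneg ha hb
  neg_mem' {a} ha := by
    simp only [Set.mem_setOf_eq] at *
    rwa [w.v_neg]

lemma mem_integers_iff (w : CompleteDiscreteValuation K) (x : K) :
    x ∈ w.integers ↔ 0 ≤ w.v x := Iff.rfl

/-- The maximal ideal of the valuation ring. -/
def maxIdeal (w : CompleteDiscreteValuation K) : Ideal w.integers where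
  carrier := {x | 0 < w.v (x : K)}
  zero_mem' := by simp [Set.mem_setOf_eq, v_zero]
  add_mem' {a b} ha hb := lt_of_lt_of_le (lt_min ha hb) (w.min_le_add (a : K) (b : K))
  smul_mem' c x hx := by
    simp only [Set.mem_setOf_eq] at *
    show 0 < w.v ((c : K) * (x : K))
    rw [w.map_mul]
    exact lt_of_lt_of_le hx (le_add_of_nonneg_left c.2)

/-- The residue field of a complete discretely valued field. -/
abbrev residueField (w : CompleteDiscreteValuation K) := w.integers ⧸ w.maxIdeal

section Extension

variable {L : Type*} [Field L] [Algebra K L]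

/-- The ring homomorphism between valuation rings induced by the inclusion `K ⟶ L`,
when the valuation of `L` restricts to `e` times the valuation of `K`. -/
def integerMap (wK : CompleteDiscreteValuation K) (wL : CompleteDiscreteValuation L)
    (e : ℕ) (hcomp : ∀ x : K, wL.v (algebraMap K L x) = e • wK.v x) :
    wK.integers →+* wL.integers where
  toFun x := ⟨algebraMap K L x, by
    rw [mem_integers_iff, hcomp]
    exact nsmul_nonneg x.2 e⟩
  map_one' := Subtype.ext (by simp)
  map_mul' x y := Subtype.ext (by simp)
  map_zero' := Subtype.ext (by simp)
  map_add' x y := Subtype.ext (by simp)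

/-- The induced homomorphism between the residue fields. -/
def residueMap (wK : CompleteDiscreteValuation K) (wL : CompleteDiscreteValuation L)
    (e : ℕ) (he : 0 < e) (hcomp : ∀ x : K, wL.v (algebraMap K L x) = e • wK.v x) :
    wK.residueField →+* wL.residueField :=
  Ideal.Quotient.lift wK.maxIdeal
    ((Ideal.Quotient.mk wL.maxIdeal).comp (integerMap wK wL e hcomp))
    (by
      intro a ha
      rw [RingHom.comp_apply, Ideal.Quotient.eq_zero_iff_mem]
      show 0 < wL.v (algebraMap K L (a : K))
      rw [hcomp]
      calc (0 : WithTop ℤ) < wK.v (a : K) := ha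
        _ = 1 • wK.v (a : K) := (one_nsmul _).symm
        _ ≤ e • wK.v (a : K) := nsmul_le_nsmul_left (le_of_lt ha) he)

/-- The induced extension of residue fields `k_L / k_K` is separable. -/
def ResidueSeparable (wK : CompleteDiscreteValuation K) (wL : CompleteDiscreteValuation L)
    (e : ℕ) (he : 0 < e) (hcomp : ∀ x : K, wL.v (algebraMap K L x) = e • wK.v x) : Prop :=
  letI : Algebra wK.residueField wL.residueField := (residueMap wK wL e he hcomp).toAlgebra
  Algebra.IsSeparable wK.residueField wL.residueField

/-- A `K`-algebra automorphism of `L` (necessarily preserving the valuation, which is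
recorded in the hypothesis `hGal`) restricts to a ring homomorphism of the valuation
ring `O_L`.  This is the Galois action on `O_L`. -/
def galRes (wL : CompleteDiscreteValuation L)
    (hGal : ∀ (σ : L ≃ₐ[K] L) (x : L), wL.v (σ x) = wL.v x) (σ : L ≃ₐ[K] L) :
    wL.integers →+* wL.integers where
  toFun x := ⟨σ x, by rw [mem_integers_iff, hGal]; exact x.2⟩
  map_one' := Subtype.ext (by simp)
  map_mul' x y := Subtype.ext (by simp)
  map_zero' := Subtype.ext (by simp)
  map_add' x y := Subtype.ext (by simp)

/-- The statement that the action of the Galois group of `L/K` on `O_L/m_L^{s+1}`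
is faithful: every nontrivial automorphism moves some integer of `L` by an element
of valuation at most `s`. -/
def FaithfulOnQuotient (K : Type*) [Field K] {L : Type*} [Field L] [Algebra K L]
    (wL : CompleteDiscreteValuation L) (s : ℕ) : Prop :=
  ∀ σ : L ≃ₐ[K] L, σ ≠ 1 → ∃ x : L, 0 ≤ wL.v x ∧ wL.v (σ x - x) ≤ ((s : ℤ) : WithTop ℤ)

/-- `s` is the ramification break (lower ramification jump) of `L/K`: the smallest
nonnegative integer such that the induced action of `Gal(L/K)` on `O_L/m_L^{s+1}`
is faithful. -/
def IsRamificationBreak (K : Type*) [Field K] {L : Type*} [Field L] [Algebra K L]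
    (wL : CompleteDiscreteValuation L) (s : ℕ) : Prop :=
  FaithfulOnQuotient K wL s ∧ ∀ t : ℕ, t < s → ¬ FaithfulOnQuotient K wL t

end Extension

end CompleteDiscreteValuation

open CompleteDiscreteValuation
namespace CompleteDiscreteValuation



variable {K : Type*} [Field K] (w : CompleteDiscreteValuation K)

lemma v_ne_top_iff {x : K} : w.v x ≠ ⊤ ↔ x ≠ 0 := by
  constructor
  · intro h hx; exact h ((w.eq_top_iff x).2 hx)
  · intro h ht; exact h ((w.eq_top_iff x).1 ht)

lemma v_exists_int {x : K} (hx : x ≠ 0) : ∃ a : ℤ, w.v x = (a : WithTop ℤ) := by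
  cases h : w.v x with
  | top => exact absurd ((w.eq_top_iff x).1 h) hx
  | coe a => exact ⟨a, rfl⟩

lemma v_sub_rev (x y : K) : w.v (x - y) = w.v (y - x) := by
  rw [show y - x = -(x - y) by ring, w.v_neg]

lemma v_add_ge {c : WithTop ℤ} {x y : K} (hx : c ≤ w.v x) (hy : c ≤ w.v y) :
    c ≤ w.v (x + y) :=
  le_trans (le_min hx hy) (w.min_le_add x y)

lemma v_add_eq_of_lt {x y : K} (h : w.v x < w.v y) : w.v (x + y) = w.v x := by
  have h1 : w.v x ≤ w.v (x + y) := by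
    have := w.min_le_add x y
    rwa [min_eq_left h.le] at this
  rcases lt_or_eq_of_le h1 with h2 | h2
  · exfalso
    have h3 : w.v x = w.v ((x + y) + (-y)) := by ring_nf
    have h4 : min (w.v (x + y)) (w.v (-y)) ≤ w.v x := by
      rw [h3]; exact w.min_le_add _ _
    rw [w.v_neg] at h4
    have : w.v x < min (w.v (x + y)) (w.v y) := lt_min h2 h
    exact absurd (lt_of_le_of_lt h4 this) (lt_irrefl _)
  · exact h2.symm

lemma v_sum_ge {ι : Type*} {c : WithTop ℤ} (t : Finset ι) (f : ι → K)
    (h : ∀ i ∈ t, c ≤ w.v (f i)) : c ≤ w.v (∑ i ∈ t, f i) := by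
  classical
  induction t using Finset.induction with
  | empty => simp [w.v_zero]
  | insert a t' hni ih =>
      rw [Finset.sum_insert hni]
      exact w.v_add_ge (h a (Finset.mem_insert_self a t'))
        (ih fun i hi => h i (Finset.mem_insert_of_mem hi))

lemma v_mul_eq {x y : K} {a b : ℤ} (hx : w.v x = (a : WithTop ℤ))
    (hy : w.v y = (b : WithTop ℤ)) : w.v (x * y) = ((a + b : ℤ) : WithTop ℤ) := by
  rw [w.map_mul, hx, hy]; push_cast; rfl

lemma v_pow {x : K} {a : ℤ} (hx : w.v x = (a : WithTop ℤ)) (n : ℕ) :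
    w.v (x ^ n) = ((n * a : ℤ) : WithTop ℤ) := by
  induction n with
  | zero => simpa using w.map_one
  | succ n ih =>
      rw [pow_succ, w.v_mul_eq ih hx]
      norm_num [add_mul]

lemma v_inv {x : K} {a : ℤ} (hx0 : x ≠ 0) (hx : w.v x = (a : WithTop ℤ)) :
    w.v x⁻¹ = ((-a : ℤ) : WithTop ℤ) := by
  have h1 : w.v (x * x⁻¹) = 0 := by rw [mul_inv_cancel₀ hx0, w.map_one]
  obtain ⟨b, hb⟩ := w.v_exists_int (inv_ne_zero hx0)
  rw [w.v_mul_eq hx hb] at h1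
  have : a + b = 0 := by exact_mod_cast h1
  rw [hb]; congr 1; omega

lemma v_pow_nonneg {x : K} (hx : 0 ≤ w.v x) (n : ℕ) : 0 ≤ w.v (x ^ n) := by
  induction n with
  | zero => simp [w.map_one]
  | succ n ih => rw [pow_succ, w.map_mul]; exact add_nonneg ih hx

lemma v_mul_ge {c d : WithTop ℤ} {x y : K} (hx : c ≤ w.v x) (hy : d ≤ w.v y) :
    c + d ≤ w.v (x * y) := by
  rw [w.map_mul]; exact add_le_add hx hy

lemma v_natCast_nonneg (n : ℕ) : 0 ≤ w.v (n : K) := by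
  induction n with
  | zero => simp [w.v_zero]
  | succ n ih =>
      push_cast
      exact w.v_add_ge ih (le_of_eq w.map_one.symm)

end CompleteDiscreteValuation
namespace CDV2

open CompleteDiscreteValuation

lemma nsmul_coe (n : ℕ) (a : ℤ) :
    n • ((a : ℤ) : WithTop ℤ) = ((n * a : ℤ) : WithTop ℤ) := by
  induction n with
  | zero => simp
  | succ n ih =>
      rw [succ_nsmul, ih, ← WithTop.coe_add]
      congr 1
      push_cast
      ring

section Main

variable {p : ℕ} {K L : Type*} [Field K] [Field L] [Algebra K L]
variable (wK : CompleteDiscreteValuation K) (wL : CompleteDiscreteValuation L)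

/-- valuation of the image of a nonzero element of `K`. -/
lemma v_alg (htot : ∀ x : K, wL.v (algebraMap K L x) = p • wK.v x)
    {c : K} (hc : c ≠ 0) :
    ∃ a : ℤ, wL.v (algebraMap K L c) = ((p * a : ℤ) : WithTop ℤ) := by
  obtain ⟨a, ha⟩ := wK.v_exists_int hc
  exact ⟨a, by rw [htot, ha, nsmul_coe]⟩

variable {π : L} (hπ : wL.v π = ((1 : ℤ) : WithTop ℤ))

include hπ in
lemma pi_ne_zero : π ≠ 0 := by
  intro h
  rw [h, wL.v_zero] at hπ
  exact absurd hπ (by simp)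

include hπ in
lemma term_val (htot : ∀ x : K, wL.v (algebraMap K L x) = p • wK.v x)
    {c : K} (hc : c ≠ 0) (j : ℕ) :
    ∃ a : ℤ, wL.v (algebraMap K L c * π ^ j) = ((p * a + j : ℤ) : WithTop ℤ) := by
  obtain ⟨a, ha⟩ := v_alg wK wL htot hc
  refine ⟨a, ?_⟩
  have hpj : wL.v (π ^ j) = (((j : ℤ)) : WithTop ℤ) := by
    simpa using wL.v_pow hπ j
  exact wL.v_mul_eq ha hpj

include hπ in
/-- The valuation of a `K`-combination of powers of the uniformizer is at most the
valuation of each individual term (distinct valuations). -/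
lemma sum_le_term (hp : p.Prime) (htot : ∀ x : K, wL.v (algebraMap K L x) = p • wK.v x)
    (c : Fin p → K) (j : Fin p) :
    wL.v (∑ i, algebraMap K L (c i) * π ^ (i : ℕ)) ≤
      wL.v (algebraMap K L (c j) * π ^ (j : ℕ)) := by
  classical
  by_cases hcj : c j = 0
  · rw [hcj]; simp [wL.v_zero]
  set f : Fin p → L := fun i => algebraMap K L (c i) * π ^ (i : ℕ) with hf
  set S : Finset (Fin p) := Finset.univ.filter (fun i => c i ≠ 0) with hS
  have hjS : j ∈ S := by simp [hS, hcj]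
  have hsum : ∑ i, f i = ∑ i ∈ S, f i := by
    refine (Finset.sum_subset (Finset.subset_univ S) ?_).symm
    intro i _ hi
    have : c i = 0 := by by_contra h; exact hi (by simp [hS, h])
    simp [hf, this]
  obtain ⟨j₀, hj₀S, hj₀min⟩ := S.exists_min_image (fun i => wL.v (f i)) ⟨j, hjS⟩
  have hcj₀ : c j₀ ≠ 0 := by simpa [hS] using hj₀S
  obtain ⟨a₀, ha₀⟩ := term_val wK wL hπ htot hcj₀ (j₀ : ℕ)
  have ha₀' : wL.v (f j₀) = ((p * a₀ + j₀ : ℤ) : WithTop ℤ) := ha₀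
  -- every other term in S has strictly bigger valuation
  have hstrict : ∀ i ∈ S.erase j₀, (((p * a₀ + j₀ : ℤ) + 1 : ℤ) : WithTop ℤ) ≤ wL.v (f i) := by
    intro i hi
    obtain ⟨hij₀, hiS⟩ := Finset.mem_erase.1 hi
    have hci : c i ≠ 0 := by simpa [hS] using hiS
    obtain ⟨a, ha⟩ := term_val wK wL hπ htot hci (i : ℕ)
    have ha' : wL.v (f i) = ((p * a + i : ℤ) : WithTop ℤ) := ha
    have hge : wL.v (f j₀) ≤ wL.v (f i) := hj₀min i hiS
    rw [ha₀', ha'] at hge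
    rw [ha']
    have hne : (p * a₀ + (j₀ : ℕ) : ℤ) ≠ (p * a + (i : ℕ) : ℤ) := by
      intro h
      have hi1 : (i : ℕ) < p := i.2
      have hj1 : (j₀ : ℕ) < p := j₀.2
      have hdvd : (p : ℤ) ∣ ((i : ℕ) : ℤ) - ((j₀ : ℕ) : ℤ) := ⟨a₀ - a, by linarith⟩
      have habs : |((i : ℕ) : ℤ) - ((j₀ : ℕ) : ℤ)| < (p : ℤ) := by
        rw [abs_lt]
        constructor <;> [omega; omega]
      have hz := Int.eq_zero_of_abs_lt_dvd hdvd habs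
      have : (i : ℕ) = (j₀ : ℕ) := by omega
      exact hij₀ (Fin.ext this)
    have hle : (p * a₀ + (j₀ : ℕ) : ℤ) ≤ (p * a + (i : ℕ) : ℤ) := by exact_mod_cast hge
    have hlt : (p * a₀ + (j₀ : ℕ) : ℤ) + 1 ≤ (p * a + (i : ℕ) : ℤ) :=
      Int.lt_iff_add_one_le.mp (lt_of_le_of_ne hle hne)
    exact_mod_cast hlt
  have hrest : (((p * a₀ + j₀ : ℤ) + 1 : ℤ) : WithTop ℤ) ≤ wL.v (∑ i ∈ S.erase j₀, f i) :=
    wL.v_sum_ge _ _ hstrict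
  have hsplit : ∑ i ∈ S, f i = f j₀ + ∑ i ∈ S.erase j₀, f i :=
    (Finset.add_sum_erase S f hj₀S).symm
  have hveq : wL.v (∑ i ∈ S, f i) = wL.v (f j₀) := by
    rw [hsplit, wL.v_add_eq_of_lt]
    calc wL.v (f j₀) = ((p * a₀ + j₀ : ℤ) : WithTop ℤ) := ha₀'
      _ < (((p * a₀ + j₀ : ℤ) + 1 : ℤ) : WithTop ℤ) := by exact_mod_cast lt_add_one _
      _ ≤ _ := hrest
  rw [hsum, hveq]
  exact hj₀min j hjS

end Main

end CDV2
namespace CDV3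

open CompleteDiscreteValuation CDV2

variable {p : ℕ} {K L : Type*} [Field K] [Field L] [Algebra K L]
variable (wK : CompleteDiscreteValuation K) (wL : CompleteDiscreteValuation L)
variable {π : L}

section Basis

variable [FiniteDimensional K L]

lemma pi_linearIndependent (hp : p.Prime) (hπ : wL.v π = ((1 : ℤ) : WithTop ℤ))
    (htot : ∀ x : K, wL.v (algebraMap K L x) = p • wK.v x) :
    LinearIndependent K (fun i : Fin p => π ^ (i : ℕ)) := by
  rw [Fintype.linearIndependent_iff]
  intro g hg j
  have h0 : wL.v (∑ i, algebraMap K L (g i) * π ^ (i : ℕ)) = ⊤ := by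
    have : (∑ i, algebraMap K L (g i) * π ^ (i : ℕ)) = 0 := by
      rw [← hg]
      exact Finset.sum_congr rfl fun i _ => (Algebra.smul_def (g i) (π ^ (i : ℕ))).symm
    rw [this, wL.v_zero]
  have hle := sum_le_term wK wL hπ hp htot g j
  rw [h0] at hle
  have htop : wL.v (algebraMap K L (g j) * π ^ (j : ℕ)) = ⊤ := le_antisymm le_top hle
  have hzero : algebraMap K L (g j) * π ^ (j : ℕ) = 0 := (wL.eq_top_iff _).1 htop
  have hπj : π ^ (j : ℕ) ≠ 0 := pow_ne_zero _ (pi_ne_zero wL hπ)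
  have : algebraMap K L (g j) = 0 := by
    rcases mul_eq_zero.1 hzero with h | h
    · exact h
    · exact absurd h hπj
  exact (map_eq_zero (algebraMap K L)).1 this

lemma exists_expansion (hp : p.Prime) (hπ : wL.v π = ((1 : ℤ) : WithTop ℤ))
    (htot : ∀ x : K, wL.v (algebraMap K L x) = p • wK.v x)
    (hdeg : Module.finrank K L = p) (u : L) :
    ∃ c : Fin p → K, u = ∑ i, algebraMap K L (c i) * π ^ (i : ℕ) := by
  have : Nonempty (Fin p) := ⟨⟨0, hp.pos⟩⟩
  have hcard : Fintype.card (Fin p) = Module.finrank K L := by simp [hdeg]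
  let b := basisOfLinearIndependentOfCardEqFinrank
    (pi_linearIndependent wK wL hp hπ htot) hcard
  refine ⟨fun i => b.repr u i, ?_⟩
  have hb : ∀ i, b i = π ^ (i : ℕ) := fun i => by
    rw [coe_basisOfLinearIndependentOfCardEqFinrank]
  have := (b.sum_repr u).symm
  calc u = ∑ i, b.repr u i • b i := this
    _ = ∑ i, algebraMap K L (b.repr u i) * π ^ (i : ℕ) := by
        refine Finset.sum_congr rfl fun i _ => ?_
        rw [hb i, Algebra.smul_def]

end Basis

section Galois

variable [FiniteDimensional K L]

lemma v_galois_bound (hp : p.Prime) (hπ : wL.v π = ((1 : ℤ) : WithTop ℤ))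
    (htot : ∀ x : K, wL.v (algebraMap K L x) = p • wK.v x)
    (hdeg : Module.finrank K L = p) (τ : L ≃ₐ[K] L) :
    ∃ C : ℤ, ∀ u : L, wL.v u ≤ wL.v (τ u) + (C : WithTop ℤ) := by
  have hπ0 : π ≠ 0 := pi_ne_zero wL hπ
  have hτπ0 : τ π ≠ 0 := fun h => hπ0 (τ.injective (by simpa using h))
  obtain ⟨r, hr⟩ := wL.v_exists_int hτπ0
  refine ⟨p * (1 + |1 - r|), ?_⟩
  intro u
  by_cases hu : u = 0
  · simp [hu, wL.v_zero]
  obtain ⟨b, hb⟩ := wL.v_exists_int hu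
  obtain ⟨c, hc⟩ := exists_expansion wK wL hp hπ htot hdeg u
  have hτu : τ u = ∑ i, algebraMap K L (c i) * (τ π) ^ (i : ℕ) := by
    rw [hc, map_sum]
    refine Finset.sum_congr rfl fun i _ => ?_
    rw [_root_.map_mul, _root_.map_pow, AlgEquiv.commutes]
  have key : ((b - p * (1 + |1 - r|) : ℤ) : WithTop ℤ) ≤ wL.v (τ u) := by
    rw [hτu]
    refine wL.v_sum_ge _ _ ?_
    intro i _
    by_cases hci : c i = 0
    · simp [hci, wL.v_zero]
    · obtain ⟨a, ha⟩ := v_alg wK wL htot hci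
      have hterm : wL.v (algebraMap K L (c i) * π ^ (i : ℕ))
          = ((p * a + i : ℤ) : WithTop ℤ) := by
        have hpj : wL.v (π ^ (i : ℕ)) = (((i : ℕ) : ℤ) : WithTop ℤ) := by
          simpa using wL.v_pow hπ (i : ℕ)
        exact wL.v_mul_eq ha hpj
      have hterm' : wL.v (algebraMap K L (c i) * (τ π) ^ (i : ℕ))
          = ((p * a + i * r : ℤ) : WithTop ℤ) := by
        have hpj : wL.v ((τ π) ^ (i : ℕ)) = (((i : ℕ) * r : ℤ) : WithTop ℤ) :=
          wL.v_pow hr (i : ℕ)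
        rw [wL.v_mul_eq ha hpj]
      have hge : wL.v u ≤ wL.v (algebraMap K L (c i) * π ^ (i : ℕ)) := by
        rw [hc]; exact sum_le_term wK wL hπ hp htot c i
      rw [hb, hterm] at hge
      have hble : (b : ℤ) ≤ p * a + i := by exact_mod_cast hge
      rw [hterm']
      have hip : ((i : ℕ) : ℤ) < p := by exact_mod_cast i.2
      have hineq : (b - p * (1 + |1 - r|) : ℤ) ≤ p * a + i * r := by
        have h1 : ((i : ℕ) : ℤ) * (1 - r) ≤ p * (1 + |1 - r|) := by
          rcases le_or_gt (1 - r) 0 with h | h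
          · have : ((i : ℕ) : ℤ) * (1 - r) ≤ 0 :=
              mul_nonpos_of_nonneg_of_nonpos (by positivity) h
            have h2 : (0 : ℤ) ≤ p * (1 + |1 - r|) := by positivity
            linarith
          · have hi0 : (0 : ℤ) ≤ ((i : ℕ) : ℤ) := by positivity
            have : ((i : ℕ) : ℤ) * (1 - r) ≤ p * (1 - r) := by nlinarith
            have h3 : (1 - r : ℤ) ≤ |1 - r| := le_abs_self _
            nlinarith [hp.pos]
        linarith
      exact_mod_cast hineq
  calc wL.v u = ((b : ℤ) : WithTop ℤ) := hb
    _ ≤ ((b - p * (1 + |1 - r|) : ℤ) : WithTop ℤ) + ((p * (1 + |1 - r|) : ℤ) : WithTop ℤ) := by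
        rw [← WithTop.coe_add]
        exact_mod_cast le_of_eq (by ring)
    _ ≤ wL.v (τ u) + ((p * (1 + |1 - r|) : ℤ) : WithTop ℤ) := by
        exact add_le_add key le_rfl

lemma v_galois (hp : p.Prime) (hπ : wL.v π = ((1 : ℤ) : WithTop ℤ))
    (htot : ∀ x : K, wL.v (algebraMap K L x) = p • wK.v x)
    (hdeg : Module.finrank K L = p) (τ : L ≃ₐ[K] L) (z : L) :
    wL.v (τ z) = wL.v z := by
  by_cases hz : z = 0
  · rw [hz, _root_.map_zero]
  obtain ⟨C, hC⟩ := v_galois_bound wK wL hp hπ htot hdeg τ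
  have key : ∀ y : L, y ≠ 0 → wL.v y ≤ wL.v (τ y) := by
    intro y hy
    obtain ⟨a, ha⟩ := wL.v_exists_int hy
    have hτy : τ y ≠ 0 := fun h => hy (τ.injective (by simpa using h))
    obtain ⟨b, hb⟩ := wL.v_exists_int hτy
    rw [ha, hb]
    have hab : ∀ n : ℕ, (n : ℤ) * a ≤ n * b + C := by
      intro n
      have h1 := hC (y ^ n)
      rw [wL.v_pow ha n, _root_.map_pow, wL.v_pow hb n, ← WithTop.coe_add] at h1
      exact_mod_cast h1
    by_contra hcon
    have hba : b + 1 ≤ a := by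
      have : (b : ℤ) < a := by exact_mod_cast not_le.1 hcon
      omega
    set n : ℕ := C.toNat + 1 with hn
    have h2 := hab n
    have h3 : (C : ℤ) < (n : ℤ) := by
      have := Int.self_le_toNat C
      push_cast [hn]
      omega
    nlinarith [h2, h3, hba]
  have h1 := key z hz
  have h2 := key z⁻¹ (inv_ne_zero hz)
  obtain ⟨a, ha⟩ := wL.v_exists_int hz
  have hτz : τ z ≠ 0 := fun h => hz (τ.injective (by simpa using h))
  obtain ⟨b, hb⟩ := wL.v_exists_int hτz
  rw [map_inv₀] at h2
  rw [wL.v_inv hz ha, wL.v_inv hτz hb] at h2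
  rw [ha, hb] at h1 ⊢
  have e1 : (a : ℤ) ≤ b := by exact_mod_cast h1
  have e2 : (-a : ℤ) ≤ -b := by exact_mod_cast h2
  have : a = b := by omega
  rw [this]

end Galois

end CDV3
namespace CDV4

open CompleteDiscreteValuation CDV2 CDV3

lemma coe_lt_succ_le {m : ℤ} {w : WithTop ℤ} (h : ((m : ℤ) : WithTop ℤ) < w) :
    (((m + 1 : ℤ)) : WithTop ℤ) ≤ w := by
  cases w with
  | top => exact le_top
  | coe a =>
      have : m < a := by exact_mod_cast h
      exact_mod_cast (by omega : m + 1 ≤ a)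

variable {p : ℕ} {K L : Type*} [Field K] [Field L] [Algebra K L]
variable (wK : CompleteDiscreteValuation K) (wL : CompleteDiscreteValuation L)
variable [IsGalois K L] [FiniteDimensional K L]
variable {σ : L ≃ₐ[K] L} {s : ℕ} {π : L}

section GroupFacts

lemma card_gal (hdeg : Module.finrank K L = p) : Fintype.card (L ≃ₐ[K] L) = p := by
  rw [← Nat.card_eq_fintype_card, IsGalois.card_aut_eq_finrank, hdeg]

lemma pow_card_gal (hp : p.Prime) (hdeg : Module.finrank K L = p) (τ : L ≃ₐ[K] L) :
    τ ^ p = 1 := by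
  rw [← card_gal (p := p) hdeg]
  exact pow_card_eq_one

lemma exists_pow_eq (hp : p.Prime) (hdeg : Module.finrank K L = p)
    {τ₀ : L ≃ₐ[K] L} (hτ₀ : τ₀ ≠ 1) (τ : L ≃ₐ[K] L) : ∃ k : ℕ, τ₀ ^ k = τ := by
  have : Fact p.Prime := ⟨hp⟩
  have horder : orderOf τ₀ = p := orderOf_eq_prime (pow_card_gal hp hdeg τ₀) hτ₀
  have htop : Subgroup.zpowers τ₀ = ⊤ := by
    rw [← Subgroup.card_eq_iff_eq_top]
    rw [Nat.card_zpowers, horder, Nat.card_eq_fintype_card, card_gal (p := p) hdeg]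
  have hmem : τ ∈ Subgroup.zpowers τ₀ := by rw [htop]; exact Subgroup.mem_top τ
  have := Submonoid.mem_powers_iff τ τ₀
  rw [mem_powers_iff_mem_zpowers] at this
  exact this.1 hmem

lemma sigma_ne_one (hp : p.Prime) (hdeg : Module.finrank K L = p)
    (hσ : ∀ τ : L ≃ₐ[K] L, τ ∈ Subgroup.zpowers σ) : σ ≠ 1 := by
  intro h
  have hcard := card_gal (p := p) (K := K) (L := L) hdeg
  have : ∀ τ : L ≃ₐ[K] L, τ = 1 := by
    intro τ
    obtain ⟨m, hm⟩ := hσ τ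
    rw [← hm, h]
    simp
  have h2 : Fintype.card (L ≃ₐ[K] L) ≤ 1 :=
    Fintype.card_le_one_iff.2 fun a b => by rw [this a, this b]
  have := hp.two_le
  omega

end GroupFacts

section RamBreak

/-- Fact (A): every Galois automorphism moves integers by valuation at least `s`. -/
lemma v_gal_sub_ge (hp : p.Prime) (hπ : wL.v π = ((1 : ℤ) : WithTop ℤ))
    (htot : ∀ x : K, wL.v (algebraMap K L x) = p • wK.v x)
    (hdeg : Module.finrank K L = p)
    (hs : IsRamificationBreak K wL s) (τ : L ≃ₐ[K] L) (x : L) (hx : 0 ≤ wL.v x) :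
    ((s : ℤ) : WithTop ℤ) ≤ wL.v (τ x - x) := by
  have hginv := v_galois wK wL hp hπ htot hdeg
  rcases Nat.eq_zero_or_pos s with hs0 | hs1
  · subst hs0
    push_cast
    rw [sub_eq_add_neg]
    exact wL.v_add_ge (by rw [hginv τ x]; exact hx) (by rw [wL.v_neg]; exact hx)
  · have hnf := hs.2 (s - 1) (by omega)
    rw [FaithfulOnQuotient] at hnf
    push_neg at hnf
    obtain ⟨τ₀, hτ₀ne, hτ₀⟩ := hnf
    have hτ₀s : ∀ z : L, 0 ≤ wL.v z → ((s : ℤ) : WithTop ℤ) ≤ wL.v (τ₀ z - z) := by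
      intro z hz
      have h1 := hτ₀ z hz
      have h2 : (((s - 1 : ℕ) : ℤ) : WithTop ℤ) < wL.v (τ₀ z - z) := h1
      have h3 := coe_lt_succ_le h2
      have : ((s - 1 : ℕ) : ℤ) + 1 = (s : ℤ) := by
        have : 1 ≤ s := hs1
        push_cast [Nat.cast_sub this]
        ring
      rwa [this] at h3
    -- telescoping: every power of τ₀ satisfies the same bound
    have htel : ∀ k : ℕ, ∀ z : L, 0 ≤ wL.v z →
        ((s : ℤ) : WithTop ℤ) ≤ wL.v ((τ₀ ^ k) z - z) := by
      intro k
      induction k with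
      | zero => intro z _; simp [wL.v_zero]
      | succ k ih =>
          intro z hz
          have hsplit : (τ₀ ^ (k + 1)) z - z = ((τ₀ ^ k) (τ₀ z) - τ₀ z) + (τ₀ z - z) := by
            rw [pow_succ]
            simp [AlgEquiv.mul_apply]
          rw [hsplit]
          exact wL.v_add_ge (ih (τ₀ z) (by rw [hginv τ₀ z]; exact hz)) (hτ₀s z hz)
    obtain ⟨k, hk⟩ := exists_pow_eq hp hdeg hτ₀ne τ
    rw [← hk]
    exact htel k x hx

/-- Fact (B): some integer is moved by `σ` with valuation exactly `s`. -/
lemma exists_break_elt (hp : p.Prime) (hπ : wL.v π = ((1 : ℤ) : WithTop ℤ))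
    (htot : ∀ x : K, wL.v (algebraMap K L x) = p • wK.v x)
    (hdeg : Module.finrank K L = p)
    (hs : IsRamificationBreak K wL s)
    (hσ : ∀ τ : L ≃ₐ[K] L, τ ∈ Subgroup.zpowers σ) :
    ∃ a : L, 0 ≤ wL.v a ∧ wL.v (σ a - a) = ((s : ℤ) : WithTop ℤ) := by
  obtain ⟨a, ha0, ha1⟩ := hs.1 σ (sigma_ne_one hp hdeg hσ)
  exact ⟨a, ha0, le_antisymm ha1 (v_gal_sub_ge wK wL hp hπ htot hdeg hs σ a ha0)⟩

end RamBreak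

end CDV4
namespace CDV5

open CompleteDiscreteValuation CDV2 CDV3 CDV4

variable {p : ℕ} {K L : Type*} [Field K] [Field L] [Algebra K L] [CharP K p]
variable (wK : CompleteDiscreteValuation K) (wL : CompleteDiscreteValuation L)
variable [IsGalois K L] [FiniteDimensional K L]
variable {σ : L ≃ₐ[K] L} {s : ℕ} {π : L}

lemma eta_v_zero (hp : p.Prime) (hπ : wL.v π = ((1 : ℤ) : WithTop ℤ))
    (htot : ∀ x : K, wL.v (algebraMap K L x) = p • wK.v x)
    (hdeg : Module.finrank K L = p) :
    wL.v (σ π * π⁻¹) = ((0 : ℤ) : WithTop ℤ) := by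
  have hπ0 : π ≠ 0 := pi_ne_zero wL hπ
  have hσπ : wL.v (σ π) = ((1 : ℤ) : WithTop ℤ) := by
    rw [v_galois wK wL hp hπ htot hdeg σ π]; exact hπ
  have hinv : wL.v π⁻¹ = ((-1 : ℤ) : WithTop ℤ) := wL.v_inv hπ0 hπ
  rw [wL.v_mul_eq hσπ hinv]
  norm_num

lemma sigma_pi_eq (hπ : wL.v π = ((1 : ℤ) : WithTop ℤ)) :
    σ π = π * (σ π * π⁻¹) := by
  have hπ0 : π ≠ 0 := pi_ne_zero wL hπ
  field_simp

/-- The key numerical facts about `η = σ(π)/π`: the valuation of `η - 1` equals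
`s - 1`, and `s ≥ 2`. -/
lemma eta_facts (hp : p.Prime) (hπ : wL.v π = ((1 : ℤ) : WithTop ℤ))
    (htot : ∀ x : K, wL.v (algebraMap K L x) = p • wK.v x)
    (hdeg : Module.finrank K L = p)
    (hs : IsRamificationBreak K wL s)
    (hσ : ∀ τ : L ≃ₐ[K] L, τ ∈ Subgroup.zpowers σ) :
    wL.v (σ π * π⁻¹ - 1) = (((s : ℤ) - 1 : ℤ) : WithTop ℤ) ∧ 2 ≤ s := by
  have hfact : Fact p.Prime := ⟨hp⟩
  have hπ0 : π ≠ 0 := pi_ne_zero wL hπ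
  set η : L := σ π * π⁻¹ with hη
  have hη0 : wL.v η = ((0 : ℤ) : WithTop ℤ) := eta_v_zero wK wL hp hπ htot hdeg
  have hηne : η ≠ 0 := (wL.v_ne_top_iff).1 (by rw [hη0]; simp)
  have hπη : σ π = π * η := sigma_pi_eq wL hπ
  have hη0nn : (0 : WithTop ℤ) ≤ wL.v η := by
    rw [hη0]; exact_mod_cast le_refl (0 : ℤ)
  have hsnn : (0 : WithTop ℤ) ≤ ((s : ℤ) : WithTop ℤ) := by
    exact_mod_cast Int.ofNat_nonneg s
  -- η ≠ 1
  have hηnot1 : η ≠ 1 := by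
    intro h1
    obtain ⟨a, ha0, hfa⟩ := exists_break_elt wK wL hp hπ htot hdeg hs hσ
    have hσπ' : σ π = π := by rw [hπη, h1, mul_one]
    obtain ⟨c, hc⟩ := exists_expansion wK wL hp hπ htot hdeg a
    have hσa : σ a = a := by
      rw [hc, map_sum]
      refine Finset.sum_congr rfl fun i _ => ?_
      rw [_root_.map_mul, _root_.map_pow, AlgEquiv.commutes, hσπ']
    rw [hσa, sub_self, wL.v_zero] at hfa
    exact (by simp : ((s : ℤ) : WithTop ℤ) ≠ ⊤) hfa.symm
  have hδne : η - 1 ≠ 0 := sub_ne_zero.2 hηnot1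
  obtain ⟨d, hd⟩ := wL.v_exists_int hδne
  have hd0 : (0 : ℤ) ≤ d := by
    have : (0 : WithTop ℤ) ≤ wL.v (η - 1) := by
      rw [sub_eq_add_neg]
      refine wL.v_add_ge hη0nn ?_
      rw [wL.v_neg, wL.map_one]
    rw [hd] at this
    exact_mod_cast this
  -- lower bound : s - 1 ≤ d
  have hlow : (s : ℤ) - 1 ≤ d := by
    have h1 : ((s : ℤ) : WithTop ℤ) ≤ wL.v (σ π - π) :=
      v_gal_sub_ge wK wL hp hπ htot hdeg hs σ π (by rw [hπ]; exact_mod_cast (by norm_num : (0:ℤ) ≤ 1))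
    have h2 : σ π - π = π * (η - 1) := by rw [hπη]; ring
    rw [h2, wL.v_mul_eq hπ hd] at h1
    have : (s : ℤ) ≤ 1 + d := by exact_mod_cast h1
    omega
  -- upper bound : d ≤ s - 1
  have hup : d ≤ (s : ℤ) - 1 := by
    obtain ⟨a, ha0, hfa⟩ := exists_break_elt wK wL hp hπ htot hdeg hs hσ
    obtain ⟨c, hc⟩ := exists_expansion wK wL hp hπ htot hdeg a
    have hσa : σ a - a = ∑ i, algebraMap K L (c i) * π ^ (i : ℕ) * (η ^ (i : ℕ) - 1) := by
      rw [hc, map_sum, ← Finset.sum_sub_distrib]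
      refine Finset.sum_congr rfl fun i _ => ?_
      rw [_root_.map_mul, _root_.map_pow, AlgEquiv.commutes, hπη, mul_pow]
      ring
    have hterm : ∀ i : Fin p, (((1 + d : ℤ)) : WithTop ℤ) ≤
        wL.v (algebraMap K L (c i) * π ^ (i : ℕ) * (η ^ (i : ℕ) - 1)) := by
      intro i
      by_cases hci : c i = 0
      · rw [hci]; simp [wL.v_zero]
      by_cases hi0 : (i : ℕ) = 0
      · rw [hi0]; simp [wL.v_zero]
      -- v(alg c_i * π^i) ≥ i ≥ 1
      obtain ⟨ai, hai⟩ := term_val wK wL hπ htot hci (i : ℕ)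
      have hnn : (0 : WithTop ℤ) ≤ wL.v (algebraMap K L (c i) * π ^ (i : ℕ)) := by
        have h2 := sum_le_term wK wL hπ hp htot c i
        rw [← hc] at h2
        exact le_trans ha0 h2
      have hai0 : 0 ≤ ai := by
        rw [hai] at hnn
        have h3 : (0 : ℤ) ≤ p * ai + i := by exact_mod_cast hnn
        by_contra hneg
        push_neg at hneg
        have h4 : ai ≤ -1 := by omega
        have h5 : (p : ℤ) * ai ≤ p * (-1) := by
          apply mul_le_mul_of_nonneg_left h4 (by positivity)
        have h6 : ((i : ℕ) : ℤ) < p := by exact_mod_cast i.2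
        omega
      have hone : ((1 : ℤ) : WithTop ℤ) ≤ wL.v (algebraMap K L (c i) * π ^ (i : ℕ)) := by
        rw [hai]
        have : (1 : ℤ) ≤ p * ai + i := by
          have h6 : 1 ≤ (i : ℕ) := Nat.pos_of_ne_zero hi0
          have : (0 : ℤ) ≤ p * ai := mul_nonneg (by positivity) hai0
          have h7 : (1 : ℤ) ≤ ((i : ℕ) : ℤ) := by exact_mod_cast h6
          omega
        exact_mod_cast this
      have hgeom : ((d : ℤ) : WithTop ℤ) ≤ wL.v (η ^ (i : ℕ) - 1) := by
        rw [← geom_sum_mul η (i : ℕ)]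
        have h8 : (0 : WithTop ℤ) ≤ wL.v (∑ j ∈ Finset.range (i : ℕ), η ^ j) := by
          refine wL.v_sum_ge _ _ fun j _ => ?_
          exact wL.v_pow_nonneg hη0nn j
        have := wL.v_mul_ge h8 (le_of_eq hd.symm)
        simpa using this
      have := wL.v_mul_ge hone hgeom
      rwa [← WithTop.coe_add] at this
    have hsum := wL.v_sum_ge Finset.univ _ (fun i _ => hterm i)
    rw [← hσa, hfa] at hsum
    have : (1 + d : ℤ) ≤ (s : ℤ) := by exact_mod_cast hsum
    omega
  have hds : d = (s : ℤ) - 1 := le_antisymm hup hlow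
  -- now show s ≥ 2 : via the product of conjugates of η
  have hCharL : CharP L p := charP_of_injective_algebraMap (algebraMap K L).injective p
  have hprod : ∀ i : ℕ, (σ ^ i) π = π * ∏ j ∈ Finset.range i, (σ ^ j) η := by
    intro i
    induction i with
    | zero => simp
    | succ i ih =>
        have hps : σ ^ (i + 1) = σ * σ ^ i := by rw [pow_succ']
        rw [hps, AlgEquiv.mul_apply, ih, _root_.map_mul, hπη, map_prod]
        rw [Finset.prod_range_succ']
        have : ∀ j ∈ Finset.range i, σ ((σ ^ j) η) = (σ ^ (j + 1)) η := by
          intro j _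
          rw [pow_succ', AlgEquiv.mul_apply]
        rw [Finset.prod_congr rfl this]
        simp [pow_zero]
        ring
  have hprod1 : ∏ j ∈ Finset.range p, (σ ^ j) η = 1 := by
    have h9 := hprod p
    rw [pow_card_gal hp hdeg σ] at h9
    have : π * 1 = π * ∏ j ∈ Finset.range p, (σ ^ j) η := by
      rw [mul_one]; simpa using h9
    exact (mul_left_cancel₀ hπ0 this).symm
  have hexp : ∀ i : ℕ, ∃ D : L, (∏ j ∈ Finset.range i, (σ ^ j) η) = η ^ i + D ∧
      ((s : ℤ) : WithTop ℤ) ≤ wL.v D := by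
    intro i
    induction i with
    | zero => exact ⟨0, by simp, by rw [wL.v_zero]; exact le_top⟩
    | succ i ih =>
        obtain ⟨D, hD1, hD2⟩ := ih
        set dd : L := (σ ^ i) η - η with hdd
        have hddv : ((s : ℤ) : WithTop ℤ) ≤ wL.v dd :=
          v_gal_sub_ge wK wL hp hπ htot hdeg hs (σ ^ i) η hη0nn
        refine ⟨η ^ i * dd + D * η + D * dd, ?_, ?_⟩
        · rw [Finset.prod_range_succ, hD1]
          have : (σ ^ i) η = η + dd := by rw [hdd]; ring
          rw [this]
          ring
        · refine wL.v_add_ge (wL.v_add_ge ?_ ?_) ?_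
          · have := wL.v_mul_ge (wL.v_pow_nonneg hη0nn i) hddv
            simpa using this
          · have := wL.v_mul_ge hD2 hη0nn
            simpa using this
          · exact le_trans (le_add_of_nonneg_right hsnn) (wL.v_mul_ge hD2 hddv)
  obtain ⟨D, hD1, hD2⟩ := hexp p
  have hηp : η ^ p = 1 + (η - 1) ^ p := by
    have : η = 1 + (η - 1) := by ring
    rw [this, add_pow_char]
    simp
  have hδp : (η - 1) ^ p = -D := by
    have h10 : (1 : L) = 1 + (η - 1) ^ p + D := by rw [← hηp, ← hD1, hprod1]
    linear_combination -h10
  have hvp : wL.v ((η - 1) ^ p) = ((p * d : ℤ) : WithTop ℤ) := wL.v_pow hd p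
  have hfin : ((s : ℤ) : WithTop ℤ) ≤ ((p * d : ℤ) : WithTop ℤ) := by
    rw [← hvp, hδp, wL.v_neg]
    exact hD2
  have hfin' : (s : ℤ) ≤ p * d := by exact_mod_cast hfin
  have hs2 : 2 ≤ s := by
    by_contra hcon
    push_neg at hcon
    interval_cases s
    · omega
    · have : d = 0 := by omega
      rw [this] at hfin'
      omega
  exact ⟨by rw [hd, hds], hs2⟩

end CDV5
namespace CDV6

open CompleteDiscreteValuation CDV2 CDV3 CDV4 CDV5

variable {p : ℕ} {K L : Type*} [Field K] [Field L] [Algebra K L]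
variable (wK : CompleteDiscreteValuation K) (wL : CompleteDiscreteValuation L)

lemma binom_aux {δ : L} (hδ : (0 : WithTop ℤ) ≤ wL.v δ) (m : ℕ) :
    ∃ r : L, (1 + δ) ^ m = 1 + (m : L) * δ + δ ^ 2 * r ∧ (0 : WithTop ℤ) ≤ wL.v r := by
  induction m with
  | zero => exact ⟨0, by norm_num, by rw [wL.v_zero]; exact le_top⟩
  | succ m ih =>
      obtain ⟨r, hr1, hr2⟩ := ih
      refine ⟨(m : L) + r + r * δ, ?_, ?_⟩
      · rw [pow_succ, hr1]
        push_cast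
        ring
      · refine wL.v_add_ge (wL.v_add_ge (wL.v_natCast_nonneg m) hr2) ?_
        have := wL.v_mul_ge hr2 hδ
        simpa using this

lemma cast_val_zero (hp : p.Prime) (hCharL : CharP L p) {m : ℕ} (hm : ¬ p ∣ m) :
    wL.v ((m : L)) = ((0 : ℤ) : WithTop ℤ) := by
  have : Fact p.Prime := ⟨hp⟩
  have hne : ((m : ZMod p)) ≠ 0 := by
    rwa [Ne, ZMod.natCast_eq_zero_iff]
  have hfl : ((m : ZMod p)) ^ (p - 1) = 1 := ZMod.pow_card_sub_one_eq_one hne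
  have hcast : (((m : ZMod p) : ZMod p) : ZMod p) = (m : ZMod p) := rfl
  have hml : ((m : L)) ^ (p - 1) = 1 := by
    have h1 : (ZMod.castHom dvd_rfl L) ((m : ZMod p)) = (m : L) := map_natCast _ m
    calc ((m : L)) ^ (p - 1) = (ZMod.castHom dvd_rfl L) ((m : ZMod p) ^ (p - 1)) := by
          rw [_root_.map_pow, h1]
      _ = 1 := by rw [hfl, _root_.map_one]
  have hm0 : (m : L) ≠ 0 := by
    intro h
    rw [h] at hml
    have hp1 : 1 ≤ p - 1 := by have := hp.two_le; omega
    rw [zero_pow (by omega : p - 1 ≠ 0)] at hml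
    exact zero_ne_one hml
  obtain ⟨a, ha⟩ := wL.v_exists_int hm0
  have := wL.v_pow ha (p - 1)
  rw [hml, wL.map_one] at this
  have h2 : ((p - 1 : ℕ) : ℤ) * a = 0 := by exact_mod_cast this.symm
  have hp1 : 1 ≤ p - 1 := by have := hp.two_le; omega
  have : a = 0 := by
    rcases mul_eq_zero.1 h2 with h | h
    · exfalso; have : ((p - 1 : ℕ) : ℤ) ≥ 1 := by exact_mod_cast hp1
      omega
    · exact h
  rw [ha, this]

/-- Valuation of `η^m - 1` and `(η⁻¹)^m - 1` for `p ∤ m`. -/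
lemma eta_pow_sub_one (hp : p.Prime) (hCharL : CharP L p) {η : L} {e : ℤ}
    (hη0 : wL.v η = ((0 : ℤ) : WithTop ℤ))
    (hδ : wL.v (η - 1) = ((e : ℤ) : WithTop ℤ)) (he : 1 ≤ e)
    {m : ℕ} (hm : ¬ p ∣ m) :
    wL.v (η ^ m - 1) = ((e : ℤ) : WithTop ℤ) ∧
      wL.v ((η⁻¹) ^ m - 1) = ((e : ℤ) : WithTop ℤ) := by
  have hηne : η ≠ 0 := (wL.v_ne_top_iff).1 (by rw [hη0]; simp)
  set δ : L := η - 1 with hδdef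
  have hδnn : (0 : WithTop ℤ) ≤ wL.v δ := by rw [hδ]; exact_mod_cast he.trans' (by norm_num)
  obtain ⟨r, hr1, hr2⟩ := binom_aux wL hδnn m
  have hηm : η ^ m - 1 = (m : L) * δ + δ ^ 2 * r := by
    have : η = 1 + δ := by rw [hδdef]; ring
    rw [this, hr1]; ring
  have hmv : wL.v ((m : L)) = ((0 : ℤ) : WithTop ℤ) := cast_val_zero wL hp hCharL hm
  have hmδ : wL.v ((m : L) * δ) = ((0 + e : ℤ) : WithTop ℤ) := wL.v_mul_eq hmv hδ
  have hδ2r : (((2 * e : ℤ)) : WithTop ℤ) ≤ wL.v (δ ^ 2 * r) := by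
    have h1 : wL.v (δ ^ 2) = ((2 * e : ℤ) : WithTop ℤ) := wL.v_pow hδ 2
    have := wL.v_mul_ge (le_of_eq h1.symm) hr2
    simpa using this
  have hmain : wL.v (η ^ m - 1) = ((e : ℤ) : WithTop ℤ) := by
    rw [hηm, wL.v_add_eq_of_lt, hmδ]
    · norm_num
    · rw [hmδ]
      refine lt_of_lt_of_le ?_ hδ2r
      exact_mod_cast (by omega : (0 + e : ℤ) < 2 * e)
  refine ⟨hmain, ?_⟩
  have hηmne : η ^ m ≠ 0 := pow_ne_zero _ hηne
  have hηmv : wL.v (η ^ m) = ((0 : ℤ) : WithTop ℤ) := by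
    have := wL.v_pow hη0 m
    simpa using this
  have hid : (η⁻¹) ^ m - 1 = (1 - η ^ m) * (η ^ m)⁻¹ := by
    field_simp
    rw [div_pow, one_pow, sub_mul, div_mul_cancel₀ _ hηmne, one_mul]
  rw [hid]
  have hinv : wL.v ((η ^ m)⁻¹) = ((0 : ℤ) : WithTop ℤ) := by
    have := wL.v_inv hηmne hηmv
    simpa using this
  have h1m : wL.v (1 - η ^ m) = ((e : ℤ) : WithTop ℤ) := by
    rw [wL.v_sub_rev]; exact hmain
  rw [wL.v_mul_eq h1m hinv]
  norm_num

section Residue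

variable [FiniteDimensional K L] {π : L}

/-- Fact (D): residues come from `K` (total ramification kills residue extension). -/
lemma exists_residue_approx (hp : p.Prime) (hπ : wL.v π = ((1 : ℤ) : WithTop ℤ))
    (htot : ∀ x : K, wL.v (algebraMap K L x) = p • wK.v x)
    (hdeg : Module.finrank K L = p) {u : L} (hu : wL.v u = ((0 : ℤ) : WithTop ℤ)) :
    ∃ c : K, ((1 : ℤ) : WithTop ℤ) ≤ wL.v (u - algebraMap K L c) := by
  classical
  obtain ⟨c, hc⟩ := exists_expansion wK wL hp hπ htot hdeg u
  set i₀ : Fin p := ⟨0, hp.pos⟩ with hi₀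
  refine ⟨c i₀, ?_⟩
  set f : Fin p → L := fun i => algebraMap K L (c i) * π ^ (i : ℕ) with hf
  have hsplit : f i₀ + ∑ i ∈ Finset.univ.erase i₀, f i = ∑ i, f i :=
    Finset.add_sum_erase _ f (Finset.mem_univ i₀)
  have hfi₀ : f i₀ = algebraMap K L (c i₀) := by
    simp [hf, hi₀]
  have hdiff : u - algebraMap K L (c i₀) = ∑ i ∈ Finset.univ.erase i₀, f i := by
    rw [← hfi₀, hc]
    rw [← hsplit]
    ring
  rw [hdiff]
  refine wL.v_sum_ge _ _ ?_
  intro i hi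
  have hine : i ≠ i₀ := (Finset.mem_erase.1 hi).1
  by_cases hci : c i = 0
  · simp [hf, hci, wL.v_zero]
  obtain ⟨ai, hai⟩ := term_val wK wL hπ htot hci (i : ℕ)
  have hge : wL.v u ≤ wL.v (f i) := by
    rw [hc]
    exact sum_le_term wK wL hπ hp htot c i
  rw [hu, hai] at hge
  have h0 : (0 : ℤ) ≤ p * ai + i := by exact_mod_cast hge
  have hipos : 1 ≤ (i : ℕ) := by
    rcases Nat.eq_zero_or_pos (i : ℕ) with h | h
    · exact absurd (Fin.ext (by simp [h, hi₀]) : i = i₀) hine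
    · exact h
  have hip : ((i : ℕ) : ℤ) < p := by exact_mod_cast i.2
  have hai0 : 0 ≤ ai := by
    by_contra hneg
    push_neg at hneg
    have h4 : ai ≤ -1 := by omega
    have h5 : (p : ℤ) * ai ≤ p * (-1) := mul_le_mul_of_nonneg_left h4 (by positivity)
    omega
  have hfin : (1 : ℤ) ≤ p * ai + i := by
    have : (0 : ℤ) ≤ p * ai := mul_nonneg (by positivity) hai0
    have h7 : (1 : ℤ) ≤ ((i : ℕ) : ℤ) := by exact_mod_cast hipos
    omega
  show ((1 : ℤ) : WithTop ℤ) ≤ wL.v (f i)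
  rw [hai]
  exact_mod_cast hfin

end Residue

end CDV6
namespace CDV7

open CompleteDiscreteValuation CDV2 CDV3 CDV4 CDV5 CDV6

variable {p : ℕ} {K L : Type*} [Field K] [Field L] [Algebra K L] [CharP K p]
variable (wK : CompleteDiscreteValuation K) (wL : CompleteDiscreteValuation L)
variable [IsGalois K L] [FiniteDimensional K L]
variable {σ : L ≃ₐ[K] L} {s : ℕ} {π : L}

lemma sum_gal (hp : p.Prime) (hdeg : Module.finrank K L = p)
    (hσ : ∀ τ : L ≃ₐ[K] L, τ ∈ Subgroup.zpowers σ) (x : L) :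
    ∑ τ : L ≃ₐ[K] L, τ x = ∑ i ∈ Finset.range p, (σ ^ i) x := by
  have : Fact p.Prime := ⟨hp⟩
  have hne : σ ≠ 1 := sigma_ne_one hp hdeg hσ
  have horder : orderOf σ = p := orderOf_eq_prime (pow_card_gal hp hdeg σ) hne
  have hinj : Function.Injective (fun i : Fin p => σ ^ (i : ℕ)) := by
    intro i j hij
    have h1 : (i : ℕ) ∈ Set.Iio (orderOf σ) := by rw [horder]; exact i.2
    have h2 : (j : ℕ) ∈ Set.Iio (orderOf σ) := by rw [horder]; exact j.2
    exact Fin.ext (pow_injOn_Iio_orderOf h1 h2 hij)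
  have hbij : Function.Bijective (fun i : Fin p => σ ^ (i : ℕ)) := by
    rw [Fintype.bijective_iff_injective_and_card]
    exact ⟨hinj, by rw [Fintype.card_fin, card_gal (p := p) hdeg]⟩
  have h3 : ∑ i : Fin p, (σ ^ (i : ℕ)) x = ∑ τ : L ≃ₐ[K] L, τ x :=
    Fintype.sum_bijective _ hbij _ _ fun i => rfl
  rw [← h3, ← Fin.sum_univ_eq_sum_range (fun i => (σ ^ i) x) p]

/-- Additive Hilbert 90: a trace-zero element is of the form `σ y - y` for some `y ∈ L`. -/
lemma hilbert90 (hp : p.Prime) (hdeg : Module.finrank K L = p)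
    (hσ : ∀ τ : L ≃ₐ[K] L, τ ∈ Subgroup.zpowers σ)
    {x : L} (hx : ∑ τ : L ≃ₐ[K] L, τ x = 0) :
    ∃ y : L, σ y - y = x := by
  -- get an element of trace -1
  obtain ⟨c, hc⟩ := DFunLike.ne_iff.1 (Algebra.trace_ne_zero K L)
  rw [LinearMap.zero_apply] at hc
  set t : K := Algebra.trace K L c with ht
  set c' : L := algebraMap K L (-t⁻¹) * c with hc'
  have htr : ∑ τ : L ≃ₐ[K] L, τ c' = -1 := by
    have h1 : c' = (-t⁻¹) • c := by rw [hc', Algebra.smul_def]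
    have h2 : Algebra.trace K L c' = -1 := by
      rw [h1, _root_.map_smul, ht, smul_eq_mul]
      field_simp
      exact congrArg Neg.neg (div_self hc)
    rw [← trace_eq_sum_automorphisms, h2, _root_.map_neg, _root_.map_one]
  have hsum : ∑ i ∈ Finset.range p, (σ ^ i) c' = -1 := by
    rw [← sum_gal hp hdeg hσ c']; exact htr
  have hxp : ∑ i ∈ Finset.range p, (σ ^ i) x = 0 := by
    rw [← sum_gal hp hdeg hσ x]; exact hx
  set S : ℕ → L := fun n => ∑ j ∈ Finset.range n, (σ ^ j) x with hS
  set g : ℕ → L := fun i => (σ ^ i) c' with hg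
  have hS0 : S 0 = 0 := by simp [hS]
  have hSp : S p = 0 := hxp
  have hgp : g p = c' := by rw [hg]; simp [pow_card_gal hp hdeg σ]
  have hg0 : g 0 = c' := by simp [hg]
  have hSσ : ∀ n, σ (S n) = S (n + 1) - x := by
    intro n
    have h1 : σ (S n) = ∑ j ∈ Finset.range n, (σ ^ (j + 1)) x := by
      rw [hS, map_sum]
      refine Finset.sum_congr rfl fun j _ => ?_
      rw [pow_succ', AlgEquiv.mul_apply]
    have h2 : S (n + 1) = (∑ j ∈ Finset.range n, (σ ^ (j + 1)) x) + x := by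
      show (∑ j ∈ Finset.range (n + 1), (σ ^ j) x) = _
      rw [Finset.sum_range_succ' (fun j => (σ ^ j) x) n]
      simp
    rw [h1, h2]
    ring
  have hgσ : ∀ n, σ (g n) = g (n + 1) := by
    intro n
    show σ ((σ ^ n) c') = (σ ^ (n + 1)) c'
    rw [pow_succ', AlgEquiv.mul_apply]
  refine ⟨∑ i ∈ Finset.range p, S i * g i, ?_⟩
  have hσy : σ (∑ i ∈ Finset.range p, S i * g i)
      = ∑ i ∈ Finset.range p, S (i + 1) * g (i + 1)
        - x * ∑ i ∈ Finset.range p, g (i + 1) := by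
    rw [map_sum, Finset.mul_sum, ← Finset.sum_sub_distrib]
    refine Finset.sum_congr rfl fun i _ => ?_
    rw [_root_.map_mul, hSσ i, hgσ i]
    ring
  have hA : ∑ i ∈ Finset.range p, S (i + 1) * g (i + 1) = ∑ i ∈ Finset.range p, S i * g i := by
    have h3 := (Finset.sum_range_succ' (fun i => S i * g i) p).symm.trans
      (Finset.sum_range_succ (fun i => S i * g i) p)
    simp only [hS0, hSp, zero_mul, add_zero] at h3
    simpa using h3
  have hB : ∑ i ∈ Finset.range p, g (i + 1) = -1 := by
    have h3 := (Finset.sum_range_succ' g p).symm.trans (Finset.sum_range_succ g p)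
    rw [hgp, hg0] at h3
    have h4 : ∑ i ∈ Finset.range p, g (i + 1) = ∑ i ∈ Finset.range p, g i :=
      add_right_cancel h3
    rw [h4, hsum]
  rw [hσy, hA, hB]
  ring

end CDV7
namespace CDV8

open CompleteDiscreteValuation CDV2 CDV3 CDV4 CDV5 CDV6 CDV7

variable {p : ℕ} {K L : Type*} [Field K] [Field L] [Algebra K L] [CharP K p]
variable (wK : CompleteDiscreteValuation K) (wL : CompleteDiscreteValuation L)
variable [IsGalois K L] [FiniteDimensional K L]
variable {σ : L ≃ₐ[K] L} {s : ℕ} {π : L}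

lemma descent (hp : p.Prime) (hπ : wL.v π = ((1 : ℤ) : WithTop ℤ))
    (htot : ∀ x : K, wL.v (algebraMap K L x) = p • wK.v x)
    (hdeg : Module.finrank K L = p)
    (hs : IsRamificationBreak K wL s)
    (hσ : ∀ τ : L ≃ₐ[K] L, τ ∈ Subgroup.zpowers σ)
    {x : L} (hxv : ((s : ℤ) : WithTop ℤ) ≤ wL.v x) :
    ∀ t : ℕ, ∀ y : L, σ y - y = x → (((-(t : ℤ) : ℤ)) : WithTop ℤ) ≤ wL.v y →
      ∃ y' : L, (0 : WithTop ℤ) ≤ wL.v y' ∧ σ y' - y' = x := by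
  have hπ0 : π ≠ 0 := pi_ne_zero wL hπ
  have hη0 : wL.v (σ π * π⁻¹) = ((0 : ℤ) : WithTop ℤ) := eta_v_zero wK wL hp hπ htot hdeg
  obtain ⟨hδ, hs2⟩ := eta_facts wK wL hp hπ htot hdeg hs hσ
  set η : L := σ π * π⁻¹ with hη
  have hηne : η ≠ 0 := (wL.v_ne_top_iff).1 (by rw [hη0]; simp)
  have hπη : σ π = π * η := sigma_pi_eq wL hπ
  have hCharL : CharP L p := charP_of_injective_algebraMap (algebraMap K L).injective p
  intro t
  induction t with
  | zero =>
      intro y h1 h2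
      refine ⟨y, ?_, h1⟩
      simpa using h2
  | succ t ih =>
      intro y h1 h2
      by_cases hcase : (((-(t : ℤ) : ℤ)) : WithTop ℤ) ≤ wL.v y
      · exact ih y h1 hcase
      have hy0 : y ≠ 0 := by
        intro h
        rw [h, wL.v_zero] at hcase
        exact hcase le_top
      obtain ⟨a, ha⟩ := wL.v_exists_int hy0
      have hva : a = -((t : ℤ) + 1) := by
        rw [ha] at h2 hcase
        have h3 : -((t : ℤ) + 1) ≤ a := by exact_mod_cast h2
        have h4 : ¬(-(t : ℤ) ≤ a) := fun hh => hcase (by exact_mod_cast hh)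
        omega
      by_cases hdvd : p ∣ (t + 1)
      · -- subtract an element of K to raise the valuation
        obtain ⟨m, hm⟩ := hdvd
        obtain ⟨k, hk⟩ := wK.surjective (-(m : ℤ))
        have hmz : ((t : ℤ) + 1) = (p : ℤ) * (m : ℤ) := by exact_mod_cast hm
        have hkL : wL.v (algebraMap K L k) = ((-((t : ℤ) + 1) : ℤ) : WithTop ℤ) := by
          rw [htot, hk, nsmul_coe]
          congr 1
          rw [mul_neg, ← hmz]
        have hkne : algebraMap K L k ≠ 0 :=
          (wL.v_ne_top_iff).1 (by rw [hkL]; simp)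
        set u : L := y * (algebraMap K L k)⁻¹ with hu
        have hu0 : wL.v u = ((0 : ℤ) : WithTop ℤ) := by
          have hinv : wL.v ((algebraMap K L k)⁻¹) = ((((t : ℤ) + 1) : ℤ) : WithTop ℤ) := by
            have := wL.v_inv hkne hkL
            simpa using this
          rw [hu, wL.v_mul_eq ha hinv]
          congr 1
          omega
        obtain ⟨c, hc⟩ := exists_residue_approx wK wL hp hπ htot hdeg hu0
        set y' : L := y - algebraMap K L (k * c) with hy'
        have hyeq : y' = algebraMap K L k * (u - algebraMap K L c) := by
          rw [hy', _root_.map_mul, hu]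
          field_simp
        have hv' : (((-(t : ℤ) : ℤ)) : WithTop ℤ) ≤ wL.v y' := by
          rw [hyeq]
          have := wL.v_mul_ge (le_of_eq hkL.symm) hc
          rw [← WithTop.coe_add] at this
          have h5 : (-((t : ℤ) + 1) + 1 : ℤ) = -(t : ℤ) := by ring
          rwa [h5] at this
        have hσ' : σ y' - y' = x := by
          rw [hy', map_sub, AlgEquiv.commutes]
          have : σ y - algebraMap K L (k * c) - (y - algebraMap K L (k * c)) = σ y - y := by
            ring
          rw [this, h1]
        exact ih y' hσ' hv'
      · -- impossible : the valuation of σ y - y would be too small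
        exfalso
        set m : ℕ := t + 1 with hmdef
        set u : L := y * π ^ m with hu
        have hu0 : wL.v u = ((0 : ℤ) : WithTop ℤ) := by
          have hπm : wL.v (π ^ m) = (((m : ℤ)) : WithTop ℤ) := by
            have := wL.v_pow hπ m
            simpa using this
          rw [hu, wL.v_mul_eq ha hπm]
          congr 1
          push_cast [hmdef]
          omega
        have hyeq : y = u * (π⁻¹) ^ m := by
          rw [hu]
          field_simp
          rw [div_pow, one_pow, mul_one_div_cancel (pow_ne_zero _ hπ0)]
        have hηpow := eta_pow_sub_one wL hp hCharL hη0 hδ (by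
          have : (2 : ℤ) ≤ (s : ℤ) := by exact_mod_cast hs2
          omega) (m := m) hdvd
        have hσy : σ y - y = (π⁻¹) ^ m *
            (((η⁻¹) ^ m - 1) * u + (η⁻¹) ^ m * (σ u - u)) := by
          have hσy1 : σ y = σ u * (π⁻¹) ^ m * (η⁻¹) ^ m := by
            rw [hyeq, _root_.map_mul, _root_.map_pow, map_inv₀, hπη, mul_inv]
            ring
          rw [hσy1]
          nth_rewrite 1 [hyeq]
          ring
        have hηinv : wL.v (η⁻¹) = ((0 : ℤ) : WithTop ℤ) := by
          have := wL.v_inv hηne hη0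
          simpa using this
        have hfirst : wL.v (((η⁻¹) ^ m - 1) * u)
            = ((((s : ℤ) - 1) : ℤ) : WithTop ℤ) := by
          rw [wL.v_mul_eq hηpow.2 hu0]
          norm_num
        have hsecond : ((s : ℤ) : WithTop ℤ) ≤ wL.v ((η⁻¹) ^ m * (σ u - u)) := by
          have h6 : wL.v ((η⁻¹) ^ m) = ((0 : ℤ) : WithTop ℤ) := by
            have := wL.v_pow hηinv m
            simpa using this
          have h7 : ((s : ℤ) : WithTop ℤ) ≤ wL.v (σ u - u) :=
            v_gal_sub_ge wK wL hp hπ htot hdeg hs σ u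
              (by rw [hu0]; exact_mod_cast le_refl (0 : ℤ))
          have := wL.v_mul_ge (le_of_eq h6.symm) h7
          simpa using this
        have hbr : wL.v (((η⁻¹) ^ m - 1) * u + (η⁻¹) ^ m * (σ u - u))
            = ((((s : ℤ) - 1) : ℤ) : WithTop ℤ) := by
          rw [wL.v_add_eq_of_lt, hfirst]
          rw [hfirst]
          refine lt_of_lt_of_le ?_ hsecond
          exact_mod_cast (by omega : (s : ℤ) - 1 < (s : ℤ))
        have hπinvm : wL.v ((π⁻¹) ^ m) = ((-(m : ℤ) : ℤ) : WithTop ℤ) := by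
          have h8 : wL.v (π⁻¹) = ((-1 : ℤ) : WithTop ℤ) := wL.v_inv hπ0 hπ
          have := wL.v_pow h8 m
          simpa using this
        have hfinal : wL.v (σ y - y) = ((-(m : ℤ) + ((s : ℤ) - 1) : ℤ) : WithTop ℤ) := by
          rw [hσy, wL.v_mul_eq hπinvm hbr]
        rw [h1] at hfinal
        rw [hfinal] at hxv
        have h9 : (s : ℤ) ≤ -(m : ℤ) + ((s : ℤ) - 1) := by exact_mod_cast hxv
        have h10 : (1 : ℤ) ≤ (m : ℤ) := by
          rw [hmdef]; push_cast; omega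
        omega

end CDV8

/-- Let `L/K` be a totally ramified Galois extension of degree `p` of
complete discrete valued fields of characteristic `p` with ramification break `s`, and
let `σ` generate `Gal(L/K)`.  If `x ∈ O_L` has trace zero and `v_L(x) ≥ s`, then
`x ∈ (σ - 1) O_L`; equivalently, a trace-zero integer representing a nonzero class of
`H¹(Gal(L/K), O_L)` has valuation at most `s - 1`. -/
theorem trace_zero_high_valuation_is_coboundary
    (p : ℕ) (hp : p.Prime)
    {K L : Type*} [Field K] [Field L] [Algebra K L] [CharP K p]
    (wK : CompleteDiscreteValuation K) (wL : CompleteDiscreteValuation L)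
    [IsGalois K L] [FiniteDimensional K L] (hdeg : Module.finrank K L = p)
    (htot : ∀ x : K, wL.v (algebraMap K L x) = p • wK.v x)
    (s : ℕ) (hs : IsRamificationBreak K wL s)
    (σ : L ≃ₐ[K] L) (hσ : ∀ τ : L ≃ₐ[K] L, τ ∈ Subgroup.zpowers σ) :
    ∀ x : L, x ∈ wL.integers → (∑ τ : L ≃ₐ[K] L, τ x = 0) →
      (((s : ℤ) : WithTop ℤ) ≤ wL.v x) →
      ∃ y : L, y ∈ wL.integers ∧ x = σ y - y := by
  intro x _ hxtr hxval
  obtain ⟨π, hπ⟩ := wL.surjective 1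
  obtain ⟨y₀, hy₀⟩ := CDV7.hilbert90 hp hdeg hσ hxtr
  by_cases h0 : y₀ = 0
  · refine ⟨0, wL.integers.zero_mem, ?_⟩
    rw [← hy₀, h0]
  · obtain ⟨a, ha⟩ := wL.v_exists_int h0
    set t : ℕ := (-a).toNat with htdef
    have hge : (((-(t : ℤ) : ℤ)) : WithTop ℤ) ≤ wL.v y₀ := by
      rw [ha]
      have h1 : (-a : ℤ) ≤ ((-a).toNat : ℤ) := Int.self_le_toNat (-a)
      have h2 : (-(t : ℤ) : ℤ) ≤ a := by rw [htdef]; omega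
      exact_mod_cast h2
    obtain ⟨y, hy1, hy2⟩ := CDV8.descent wK wL hp hπ htot hdeg hs hσ hxval t y₀ hy₀ hge
    exact ⟨y, (wL.mem_integers_iff y).2 hy1, hy2.symm⟩
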